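/- (SC-AdaNGD_2, general case.) Let H > 0, let f : ℝ^d → ℝ be differentiable and H-strongly convex with ‖∇f(x)‖ ≤ G for all x ∈ K, and let x_1, …, x_T and x̄_T be the SC-AdaNGD_k iterates and output with k = 2, with g_t := ∇f(x_t) ≠ 0 for all t = 1, …, T. Then f(x̄_T) − min_{x ∈ K} f(x) ≤ (1 + log(G² Σ_{t=1}^T ‖g_t‖^{−2})) / (2H Σ_{t=1}^T ‖g_t‖^{−2}) ≤ G²(1 + log T) / (2 H T). -/

import Mathlib

lemma proj_contract {E : Type*} [NormedAddCommGroup E] [InnerProductSpace ℝ E]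
    {K : Set E} (hKconv : Convex ℝ K)
    (proj : E → E) (hproj_mem : ∀ y, proj y ∈ K)
    (hproj_min : ∀ y, ∀ z ∈ K, ‖proj y - y‖ ≤ ‖z - y‖)
    (y z : E) (hz : z ∈ K) : ‖proj y - z‖ ^ 2 ≤ ‖y - z‖ ^ 2 := by
  set p := proj y with hp
  have hpK : p ∈ K := hproj_mem y
  have hinf : ‖y - p‖ = ⨅ w : K, ‖y - w‖ := by
    haveI : Nonempty K := ⟨⟨p, hpK⟩⟩
    apply le_antisymm
    · apply le_ciInf
      intro w
      rw [norm_sub_rev y p, norm_sub_rev y w]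
      exact hproj_min y w w.2
    · have hbdd : BddBelow (Set.range fun w : K => ‖y - (w : E)‖) := by
        refine ⟨0, ?_⟩
        rintro r ⟨w, rfl⟩
        exact norm_nonneg _
      exact ciInf_le hbdd ⟨p, hpK⟩
  have hvar : ∀ w ∈ K, (inner ℝ (y - p) (w - p) : ℝ) ≤ 0 :=
    (norm_eq_iInf_iff_real_inner_le_zero hKconv hpK).1 hinf
  have h1 := hvar z hz
  have h2 : (inner ℝ (y - p) (p - z) : ℝ) = -(inner ℝ (y - p) (z - p) : ℝ) := by
    rw [← inner_neg_right]; congr 1; abel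
  have hexp : ‖y - z‖ ^ 2 = ‖y - p‖ ^ 2 + 2 * (inner ℝ (y - p) (p - z) : ℝ) + ‖p - z‖ ^ 2 := by
    rw [← norm_add_sq_real]; congr 1; abel
  nlinarith [sq_nonneg ‖y - p‖]

set_option maxHeartbeats 1600000 in
theorem sc_adangd_two_general
    {d : ℕ} (T : ℕ) (hT : 1 ≤ T) (H G : ℝ) (hH : 0 < H)
    (K : Set (EuclideanSpace ℝ (Fin d)))
    (hKne : K.Nonempty) (hKcl : IsClosed K) (hKbdd : Bornology.IsBounded K)
    (hKconv : Convex ℝ K)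
    (proj : EuclideanSpace ℝ (Fin d) → EuclideanSpace ℝ (Fin d))
    (hproj_mem : ∀ y, proj y ∈ K)
    (hproj_min : ∀ y, ∀ z ∈ K, ‖proj y - y‖ ≤ ‖z - y‖)
    (f : EuclideanSpace ℝ (Fin d) → ℝ)
    (hdiff : Differentiable ℝ f)
    (hsc : ∀ x y, f x + (inner ℝ (gradient f x) (y - x) : ℝ) + (H / 2) * ‖x - y‖ ^ 2 ≤ f y)
    (hG : ∀ x ∈ K, ‖gradient f x‖ ≤ G)
    (x : ℕ → EuclideanSpace ℝ (Fin d)) (g : ℕ → EuclideanSpace ℝ (Fin d)) (η : ℕ → ℝ)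
    (hx1 : x 1 ∈ K)
    (hg : ∀ t, g t = gradient f (x t))
    (hgne : ∀ t ∈ Finset.Icc 1 T, g t ≠ 0)
    (hη : ∀ t, η t = 1 / (H * ∑ τ ∈ Finset.Icc 1 t, (‖g τ‖ ^ 2)⁻¹))
    (hupd : ∀ t ∈ Finset.Icc 1 T, x (t + 1) = proj (x t - (η t / ‖g t‖ ^ 2) • g t))
    (xbar : EuclideanSpace ℝ (Fin d))
    (hxbar : xbar = ∑ t ∈ Finset.Icc 1 T, (((‖g t‖ ^ 2)⁻¹) / ∑ τ ∈ Finset.Icc 1 T, (‖g τ‖ ^ 2)⁻¹) • x t)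
    :
    (∀ xs ∈ K,
      f xbar - f xs ≤
        (1 + Real.log (G ^ 2 * ∑ t ∈ Finset.Icc 1 T, (‖g t‖ ^ 2)⁻¹)) /
          (2 * H * ∑ t ∈ Finset.Icc 1 T, (‖g t‖ ^ 2)⁻¹)) ∧
    (1 + Real.log (G ^ 2 * ∑ t ∈ Finset.Icc 1 T, (‖g t‖ ^ 2)⁻¹)) /
        (2 * H * ∑ t ∈ Finset.Icc 1 T, (‖g t‖ ^ 2)⁻¹) ≤
      G ^ 2 * (1 + Real.log T) / (2 * H * T) := by
  -- abbreviations
  set a : ℕ → ℝ := fun t => (‖g t‖ ^ 2)⁻¹ with ha_def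
  set S : ℕ → ℝ := fun n => ∑ τ ∈ Finset.Icc 1 n, a τ with hS_def
  -- membership of iterates in K
  have hxK : ∀ t, 1 ≤ t → t ≤ T + 1 → x t ∈ K := by
    intro t
    induction t with
    | zero => omega
    | succ n _ =>
      intro _ h2
      rcases Nat.eq_zero_or_pos n with hn | hn
      · subst hn; exact hx1
      · rw [hupd n (Finset.mem_Icc.2 ⟨hn, by omega⟩)]
        exact hproj_mem _
  -- positivity of gradients' norms
  have hgt_pos : ∀ t ∈ Finset.Icc 1 T, (0:ℝ) < ‖g t‖ := fun t ht =>
    norm_pos_iff.2 (hgne t ht)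
  have ha_pos : ∀ t ∈ Finset.Icc 1 T, (0:ℝ) < a t := by
    intro t ht
    have := hgt_pos t ht
    positivity
  have hGpos : (0:ℝ) < G := by
    have h1T : (1:ℕ) ∈ Finset.Icc 1 T := Finset.mem_Icc.2 ⟨le_refl 1, hT⟩
    have := hgt_pos 1 h1T
    have hle : ‖g 1‖ ≤ G := by rw [hg]; exact hG (x 1) hx1
    linarith
  have ha_le : ∀ t ∈ Finset.Icc 1 T, (G ^ 2)⁻¹ ≤ a t := by
    intro t ht
    have h1 : ‖g t‖ ≤ G := by
      rw [hg]
      exact hG (x t) (hxK t (Finset.mem_Icc.1 ht).1 (by have := (Finset.mem_Icc.1 ht).2; omega))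
    have h2 := hgt_pos t ht
    have : ‖g t‖ ^ 2 ≤ G ^ 2 := by nlinarith
    exact inv_anti₀ (by positivity) this
  have hS_pos : ∀ n, 1 ≤ n → n ≤ T → 0 < S n := by
    intro n h1 h2
    apply Finset.sum_pos
    · intro i hi
      exact ha_pos i (Finset.mem_Icc.2 ⟨(Finset.mem_Icc.1 hi).1, le_trans (Finset.mem_Icc.1 hi).2 h2⟩)
    · exact ⟨1, Finset.mem_Icc.2 ⟨le_refl 1, h1⟩⟩
  have hS_succ : ∀ n, S (n + 1) = S n + a (n + 1) := by
    intro n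
    exact Finset.sum_Icc_succ_top (by omega) a
  have hSTpos : 0 < S T := hS_pos T hT le_rfl
  -- log sum bound
  have hlogsum : ∀ n, 1 ≤ n → n ≤ T →
      (∑ t ∈ Finset.Icc 1 n, a t / S t) ≤ 1 + Real.log (S n) - Real.log (S 1) := by
    intro n h1 h2
    induction n with
    | zero => omega
    | succ m ih =>
      rcases Nat.eq_zero_or_pos m with hm | hm
      · subst hm
        simp only [Finset.Icc_self, Finset.sum_singleton]
        have hS1 : 0 < S 1 := hS_pos 1 le_rfl h2
        have ha1 : a 1 = S 1 := by simp [hS_def]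
        rw [ha1, div_self (ne_of_gt hS1)]
        norm_num
      · have hm2 : m ≤ T := by omega
        have ihm := ih hm hm2
        rw [Finset.sum_Icc_succ_top (by omega : 1 ≤ m + 1)]
        have hSm : 0 < S m := hS_pos m hm hm2
        have hSm1 : 0 < S (m + 1) := hS_pos (m + 1) (by omega) h2
        have ham1 : 0 < a (m + 1) := ha_pos (m + 1) (Finset.mem_Icc.2 ⟨by omega, h2⟩)
        have hkey : a (m + 1) / S (m + 1) ≤ Real.log (S (m + 1)) - Real.log (S m) := by
          have hr : (0:ℝ) < S m / S (m + 1) := div_pos hSm hSm1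
          have := Real.log_le_sub_one_of_pos hr
          rw [Real.log_div (ne_of_gt hSm) (ne_of_gt hSm1)] at this
          have heq : S (m + 1) = S m + a (m + 1) := hS_succ m
          have : a (m + 1) / S (m + 1) ≤ -(Real.log (S m) - Real.log (S (m + 1))) := by
            have h3 : S m / S (m + 1) - 1 = -(a (m + 1) / S (m + 1)) := by
              field_simp
              linarith [heq]
            linarith [this, h3.symm.le]
          linarith
        linarith
  -- weighted gradient sum bound (the key recursion), for any comparison point
  constructor
  · intro xs hxs
    set D : ℕ → ℝ := fun t => ‖x t - xs‖ ^ 2 with hD_def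
    have hD_nonneg : ∀ t, 0 ≤ D t := fun t => sq_nonneg _
    have key : ∀ n, n ≤ T →
        (∑ t ∈ Finset.Icc 1 n, a t * (f (x t) - f xs)) + (H / 2) * S n * D (n + 1) ≤
          ∑ t ∈ Finset.Icc 1 n, a t / (2 * H * S t) := by
      intro n hn
      induction n with
      | zero =>
        simp [hS_def]
      | succ m ih =>
        have hm : m ≤ T := by omega
        have ihm := ih hm
        have hmem : m + 1 ∈ Finset.Icc 1 T := Finset.mem_Icc.2 ⟨by omega, hn⟩
        set t := m + 1 with ht_def
        have hgt : (0:ℝ) < ‖g t‖ := hgt_pos t hmem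
        have hat : (0:ℝ) < a t := ha_pos t hmem
        have hst : 0 < S t := hS_pos t (by omega) hn
        have hsucc : S t = S m + a t := hS_succ m
        -- projection inequality
        have hγ : η t / ‖g t‖ ^ 2 = a t / (H * S t) := by
          rw [hη t]
          show 1 / (H * S t) / ‖g t‖ ^ 2 = a t / (H * S t)
          rw [ha_def]
          field_simp
        have hproj2 : D (t + 1) ≤ ‖(x t - xs) - (a t / (H * S t)) • g t‖ ^ 2 := by
          have h1 : x (t + 1) = proj (x t - (η t / ‖g t‖ ^ 2) • g t) := hupd t hmem
          have h2 : ‖proj (x t - (η t / ‖g t‖ ^ 2) • g t) - xs‖ ^ 2 ≤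
              ‖(x t - (η t / ‖g t‖ ^ 2) • g t) - xs‖ ^ 2 :=
            proj_contract hKconv proj hproj_mem hproj_min _ xs hxs
          have h3 : (x t - (η t / ‖g t‖ ^ 2) • g t) - xs = (x t - xs) - (a t / (H * S t)) • g t := by
            rw [hγ]; abel
          calc D (t + 1) = ‖x (t + 1) - xs‖ ^ 2 := rfl
            _ = ‖proj (x t - (η t / ‖g t‖ ^ 2) • g t) - xs‖ ^ 2 := by rw [h1]
            _ ≤ ‖(x t - (η t / ‖g t‖ ^ 2) • g t) - xs‖ ^ 2 := h2
            _ = ‖(x t - xs) - (a t / (H * S t)) • g t‖ ^ 2 := by rw [h3]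
        set γ : ℝ := a t / (H * S t) with hγ_def
        set P : ℝ := (inner ℝ (g t) (x t - xs) : ℝ) with hP_def
        have hexp : ‖(x t - xs) - γ • g t‖ ^ 2 = D t - 2 * (γ * P) + γ ^ 2 * ‖g t‖ ^ 2 := by
          rw [norm_sub_sq_real, real_inner_smul_right, norm_smul]
          have : (inner ℝ (x t - xs) (g t) : ℝ) = P := real_inner_comm _ _
          rw [this]
          simp only [Real.norm_eq_abs, mul_pow, sq_abs]
          try ring
        have hA1 : D (t + 1) ≤ D t - 2 * (γ * P) + γ ^ 2 * ‖g t‖ ^ 2 := by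
          rw [← hexp]; exact hproj2
        -- strong convexity
        have hA2 : f (x t) - f xs ≤ P - (H / 2) * D t := by
          have h1 := hsc (x t) xs
          have h2 : (inner ℝ (gradient f (x t)) (xs - x t) : ℝ) = -P := by
            rw [hP_def, ← hg t, ← inner_neg_right]
            congr 1; abel
          rw [h2] at h1
          have h3 : ‖x t - xs‖ ^ 2 = D t := rfl
          rw [h3] at h1
          linarith
        -- multiply projection ineq by (H/2) * S t
        have he1 : (H / 2 * S t) * (D t - 2 * (γ * P) + γ ^ 2 * ‖g t‖ ^ 2) =
            (H / 2) * S t * D t - a t * P + a t / (2 * H * S t) := by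
          rw [hγ_def, ha_def]
          field_simp
        have h1 : (H / 2) * S t * D (t + 1) ≤ (H / 2) * S t * D t - a t * P + a t / (2 * H * S t) := by
          have hmul := mul_le_mul_of_nonneg_left hA1 (mul_pos (by linarith : (0:ℝ) < H / 2) hst).le
          calc (H / 2) * S t * D (t + 1) = (H / 2 * S t) * D (t + 1) := by ring
            _ ≤ (H / 2 * S t) * (D t - 2 * (γ * P) + γ ^ 2 * ‖g t‖ ^ 2) := hmul
            _ = (H / 2) * S t * D t - a t * P + a t / (2 * H * S t) := he1
        have h2 : a t * (f (x t) - f xs) ≤ a t * P - (H / 2) * a t * D t := by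
          have := mul_le_mul_of_nonneg_left hA2 (le_of_lt hat)
          nlinarith [this]
        have step : a t * (f (x t) - f xs) + (H / 2) * S t * D (t + 1) ≤
            (H / 2) * S m * D t + a t / (2 * H * S t) := by
          have hSm_eq : (H / 2) * S m * D t = (H / 2) * S t * D t - (H / 2) * a t * D t := by
            rw [hsucc]; ring
          rw [hSm_eq]
          linarith
        rw [Finset.sum_Icc_succ_top (by omega : 1 ≤ m + 1),
            Finset.sum_Icc_succ_top (by omega : 1 ≤ m + 1)]
        have hDt : D (m + 1) = D t := rfl
        linarith [ihm, step]
    -- conclude with Jensen-type argument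
    have hkeyT := key T le_rfl
    have hsum_le : (∑ t ∈ Finset.Icc 1 T, a t * (f (x t) - f xs)) ≤
        ∑ t ∈ Finset.Icc 1 T, a t / (2 * H * S t) := by
      have hnn : 0 ≤ (H / 2) * S T * D (T + 1) :=
        mul_nonneg (mul_nonneg (by linarith) hSTpos.le) (hD_nonneg _)
      linarith
    -- bound the RHS sum
    have hrhs : (∑ t ∈ Finset.Icc 1 T, a t / (2 * H * S t)) ≤
        (1 + Real.log (G ^ 2 * S T)) / (2 * H) := by
      have h1 : (∑ t ∈ Finset.Icc 1 T, a t / (2 * H * S t)) =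
          (∑ t ∈ Finset.Icc 1 T, a t / S t) / (2 * H) := by
        rw [Finset.sum_div]
        apply Finset.sum_congr rfl
        intro t _
        rw [div_div]
        ring_nf
      rw [h1]
      have h2 := hlogsum T hT le_rfl
      have h3 : 1 + Real.log (S T) - Real.log (S 1) ≤ 1 + Real.log (G ^ 2 * S T) := by
        have hS1pos : 0 < S 1 := hS_pos 1 le_rfl hT
        have hlogmul : Real.log (G ^ 2 * S T) = Real.log (G ^ 2) + Real.log (S T) :=
          Real.log_mul (by positivity) (ne_of_gt hSTpos)
        have hS1ge : (G ^ 2)⁻¹ ≤ S 1 := by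
          have := ha_le 1 (Finset.mem_Icc.2 ⟨le_rfl, hT⟩)
          calc (G ^ 2)⁻¹ ≤ a 1 := this
            _ = S 1 := by simp [hS_def]
        have : Real.log (G ^ 2)⁻¹ ≤ Real.log (S 1) :=
          Real.log_le_log (by positivity) hS1ge
        rw [Real.log_inv] at this
        linarith
      have h4 : (∑ t ∈ Finset.Icc 1 T, a t / S t) ≤ 1 + Real.log (G ^ 2 * S T) :=
        le_trans h2 h3
      apply div_le_div_of_nonneg_right ?_ ?_ |>.trans_eq rfl
      · exact h4
      · positivity
    -- Jensen: f xbar ≤ weighted average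
    have hw_sum : ∑ t ∈ Finset.Icc 1 T, a t / S T = 1 := by
      rw [← Finset.sum_div]
      exact div_self (ne_of_gt hSTpos)
    have hjensen : f xbar ≤ ∑ t ∈ Finset.Icc 1 T, (a t / S T) * f (x t) := by
      set v := gradient f xbar with hv
      have hzero : ∑ t ∈ Finset.Icc 1 T, (a t / S T) • (x t - xbar) = (0 : EuclideanSpace ℝ (Fin d)) := by
        simp only [smul_sub]
        rw [Finset.sum_sub_distrib, ← Finset.sum_smul, hw_sum, one_smul, ← hxbar, sub_self]
      have hineq : ∀ t ∈ Finset.Icc 1 T,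
          (a t / S T) * (f xbar + (inner ℝ v (x t - xbar) : ℝ)) ≤ (a t / S T) * f (x t) := by
        intro t ht
        apply mul_le_mul_of_nonneg_left ?_ ((div_pos (ha_pos t ht) hSTpos).le)
        have h1 := hsc xbar (x t)
        have h2 : 0 ≤ (H / 2) * ‖xbar - x t‖ ^ 2 := by positivity
        linarith
      have hsum := Finset.sum_le_sum hineq
      have hlhs : ∑ t ∈ Finset.Icc 1 T, (a t / S T) * (f xbar + (inner ℝ v (x t - xbar) : ℝ)) =
          f xbar + (inner ℝ v (∑ t ∈ Finset.Icc 1 T, (a t / S T) • (x t - xbar)) : ℝ) := by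
        rw [inner_sum]
        rw [Finset.sum_congr rfl (fun t _ => mul_add (a t / S T) (f xbar) _)]
        rw [Finset.sum_add_distrib, ← Finset.sum_mul, hw_sum, one_mul]
        congr 1
        apply Finset.sum_congr rfl
        intro t _
        rw [real_inner_smul_right]
      rw [hlhs, hzero] at hsum
      simpa using hsum
    -- combine
    have hcomb : f xbar - f xs ≤ (∑ t ∈ Finset.Icc 1 T, a t * (f (x t) - f xs)) / S T := by
      have h1 : (∑ t ∈ Finset.Icc 1 T, a t * (f (x t) - f xs)) / S T =
          (∑ t ∈ Finset.Icc 1 T, (a t / S T) * f (x t)) - f xs := by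
        rw [Finset.sum_div]
        have : ∀ t ∈ Finset.Icc 1 T, a t * (f (x t) - f xs) / S T =
            (a t / S T) * f (x t) - (a t / S T) * f xs := by
          intro t _; field_simp
        rw [Finset.sum_congr rfl this, Finset.sum_sub_distrib, ← Finset.sum_mul, hw_sum, one_mul]
      rw [h1]
      linarith [hjensen]
    have hfinal : (∑ t ∈ Finset.Icc 1 T, a t * (f (x t) - f xs)) / S T ≤
        (1 + Real.log (G ^ 2 * S T)) / (2 * H * S T) := by
      have h1 : (∑ t ∈ Finset.Icc 1 T, a t * (f (x t) - f xs)) / S T ≤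
          ((1 + Real.log (G ^ 2 * S T)) / (2 * H)) / S T := by
        apply div_le_div_of_nonneg_right ?_ hSTpos.le |>.trans_eq rfl
        exact le_trans hsum_le hrhs
      calc (∑ t ∈ Finset.Icc 1 T, a t * (f (x t) - f xs)) / S T
          ≤ ((1 + Real.log (G ^ 2 * S T)) / (2 * H)) / S T := h1
        _ = (1 + Real.log (G ^ 2 * S T)) / (2 * H * S T) := by rw [div_div]
    exact le_trans hcomb hfinal
  · -- second inequality
    have hTpos : (0:ℝ) < T := by exact_mod_cast hT
    have hT1 : (1:ℝ) ≤ T := by exact_mod_cast hT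
    have hSge : (T:ℝ) * (G ^ 2)⁻¹ ≤ S T := by
      have := Finset.card_nsmul_le_sum (Finset.Icc 1 T) a ((G ^ 2)⁻¹) (fun t ht => ha_le t ht)
      rwa [Nat.card_Icc, nsmul_eq_mul, Nat.add_sub_cancel] at this
    set u : ℝ := G ^ 2 * S T with hu_def
    have hu_ge : (T:ℝ) ≤ u := by
      rw [hu_def]
      calc (T:ℝ) = G ^ 2 * ((T:ℝ) * (G ^ 2)⁻¹) := by field_simp
        _ ≤ G ^ 2 * S T := by
            apply mul_le_mul_of_nonneg_left hSge (by positivity)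
    have hu_pos : 0 < u := lt_of_lt_of_le hTpos hu_ge
    have hu1 : (1:ℝ) ≤ u := le_trans hT1 hu_ge
    have hmain : (T:ℝ) * (1 + Real.log u) ≤ u * (1 + Real.log (T:ℝ)) := by
      have hlog : Real.log u - Real.log (T:ℝ) ≤ u / T - 1 := by
        have h1 : Real.log (u / T) ≤ u / T - 1 :=
          Real.log_le_sub_one_of_pos (by positivity)
        rwa [Real.log_div (ne_of_gt hu_pos) (ne_of_gt hTpos)] at h1
      have hlogT : 0 ≤ Real.log (T:ℝ) := Real.log_nonneg hT1
      have h2 : (T:ℝ) * Real.log (T:ℝ) ≤ u * Real.log (T:ℝ) :=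
        mul_le_mul_of_nonneg_right hu_ge hlogT
      have h3 : (T:ℝ) * (u / T - 1) = u - T := by field_simp
      nlinarith [hlog, mul_le_mul_of_nonneg_left hlog (le_of_lt hTpos)]
    have hGS : G ^ 2 * S T = u := rfl
    rw [div_le_div_iff₀ (by exact mul_pos (by linarith : (0:ℝ) < 2 * H) hSTpos) (by positivity : (0:ℝ) < 2 * H * (T:ℝ))]
    have hu_eq : S T = u / G ^ 2 := by rw [hu_def]; field_simp
    calc (1 + Real.log (G ^ 2 * S T)) * (2 * H * T)
        = 2 * H * ((T:ℝ) * (1 + Real.log u)) := by rw [hGS]; ring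
      _ ≤ 2 * H * (u * (1 + Real.log (T:ℝ))) := by
          apply mul_le_mul_of_nonneg_left hmain (by positivity)
      _ = G ^ 2 * (1 + Real.log (T:ℝ)) * (2 * H * S T) := by
          rw [hu_def]; ring
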